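/- Let L₁ and L₂ be noncommutative Lie algebras over a field F and let L = L₁ × L₂ be the product Lie algebra. Then the commuting graph Γ(L) is connected and diam(Γ(L)) ≤ 3. -/

import Mathlib

/-- The product of two Lie rings, with componentwise bracket. -/
instance prodLieRing (L₁ L₂ : Type*) [LieRing L₁] [LieRing L₂] : LieRing (L₁ × L₂) where
  bracket x y := (⁅x.1, y.1⁆, ⁅x.2, y.2⁆)
  add_lie x y z := by ext <;> exact add_lie ..
  lie_add x y z := by ext <;> exact lie_add ..
  lie_self x := by ext <;> exact lie_self ..
  leibniz_lie x y z := by ext <;> exact leibniz_lie ..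

/-- The product of two Lie algebras, with componentwise bracket. -/
instance prodLieAlgebra (F : Type*) [CommRing F] (L₁ L₂ : Type*) [LieRing L₁] [LieRing L₂]
    [LieAlgebra F L₁] [LieAlgebra F L₂] : LieAlgebra F (L₁ × L₂) where
  lie_smul t x y := by ext <;> exact lie_smul ..

/-- The commuting graph of a Lie algebra `L` over `F`: vertices are the elements of
`L` outside the center, and two distinct vertices are adjacent iff they commute. -/
def commutingGraph (F : Type*) [CommRing F] (L : Type*) [LieRing L] [LieAlgebra F L] :
    SimpleGraph {x : L // x ∉ LieAlgebra.center F L} where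
  Adj x y := x ≠ y ∧ ⁅(x : L), (y : L)⁆ = 0
  symm := ⟨fun x y h => ⟨h.1.symm, by rw [← lie_skew, h.2, neg_zero]⟩⟩
  loopless := ⟨fun x h => h.1 rfl⟩

lemma mem_center_prod_iff (F : Type*) [CommRing F]
    (L₁ : Type*) [LieRing L₁] [LieAlgebra F L₁]
    (L₂ : Type*) [LieRing L₂] [LieAlgebra F L₂] (z : L₁ × L₂) :
    z ∈ LieAlgebra.center F (L₁ × L₂) ↔
      z.1 ∈ LieAlgebra.center F L₁ ∧ z.2 ∈ LieAlgebra.center F L₂ := by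
  simp only [LieAlgebra.center, LieModule.mem_maxTrivSubmodule]
  constructor
  · intro h
    exact ⟨fun x => congrArg Prod.fst (h (x, 0)), fun x => congrArg Prod.snd (h (0, x))⟩
  · rintro ⟨h1, h2⟩ x
    exact Prod.ext (h1 x.1) (h2 x.2)

lemma edist_le_one_of_eq_or_adj {V : Type*} {G : SimpleGraph V} {u v : V}
    (h : u = v ∨ G.Adj u v) : G.edist u v ≤ 1 := by
  rcases h with rfl | h
  · simp [SimpleGraph.edist_self]
  · rw [SimpleGraph.edist_eq_one_iff_adj.mpr h]

/-- if `L₁` and `L₂` are noncommutative Lie algebras over a field `F`, then the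
commuting graph of the product Lie algebra `L₁ × L₂` is connected with diameter at most 3. -/
theorem stmt1 (F : Type*) [Field F]
    (L₁ : Type*) [LieRing L₁] [LieAlgebra F L₁]
    (L₂ : Type*) [LieRing L₂] [LieAlgebra F L₂]
    (hnc₁ : ∃ x y : L₁, ⁅x, y⁆ ≠ 0) (hnc₂ : ∃ x y : L₂, ⁅x, y⁆ ≠ 0) :
    (commutingGraph F (L₁ × L₂)).Connected ∧ (commutingGraph F (L₁ × L₂)).ediam ≤ 3 := by
  set G := commutingGraph F (L₁ × L₂) with hG
  obtain ⟨x₁, y₁, h₁⟩ := hnc₁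
  obtain ⟨x₂, y₂, h₂⟩ := hnc₂
  have hα : y₁ ∉ LieAlgebra.center F L₁ := fun h =>
    h₁ ((LieModule.mem_maxTrivSubmodule F L₁ L₁ y₁).mp h x₁)
  have hδ : y₂ ∉ LieAlgebra.center F L₂ := fun h =>
    h₂ ((LieModule.mem_maxTrivSubmodule F L₂ L₂ y₂).mp h x₂)
  have hbr : ∀ a c : L₁, ∀ b d : L₂, ⁅((a, b) : L₁ × L₂), ((c, d) : L₁ × L₂)⁆
      = (⁅a, c⁆, ⁅b, d⁆) := fun _ _ _ _ => rfl
  -- left-type midpoints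
  have hvert₁ : ∀ a : L₁, a ∉ LieAlgebra.center F L₁ →
      ((a, (0 : L₂)) : L₁ × L₂) ∉ LieAlgebra.center F (L₁ × L₂) := by
    intro a ha h
    exact ha ((mem_center_prod_iff F L₁ L₂ _).mp h).1
  have hvert₂ : ∀ b : L₂, b ∉ LieAlgebra.center F L₂ →
      (((0 : L₁), b) : L₁ × L₂) ∉ LieAlgebra.center F (L₁ × L₂) := by
    intro b hb h
    exact hb ((mem_center_prod_iff F L₁ L₂ _).mp h).2
  -- step 1: any vertex is within distance 1 of a vertex of the form (a, 0), a noncentral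
  have step1 : ∀ x : {z : L₁ × L₂ // z ∉ LieAlgebra.center F (L₁ × L₂)},
      ∃ a : L₁, ∃ ha : a ∉ LieAlgebra.center F L₁,
        G.edist x ⟨(a, 0), hvert₁ a ha⟩ ≤ 1 := by
    intro x
    by_cases h : x.val.1 ∈ LieAlgebra.center F L₁
    · refine ⟨y₁, hα, edist_le_one_of_eq_or_adj (Or.inr (And.intro ?_ ?_))⟩
      · intro he
        apply hα
        have : x.val.1 = y₁ := congrArg Prod.fst (congrArg Subtype.val he)
        rwa [← this]
      · show ⁅(x.val.1, x.val.2) , ((y₁, (0:L₂)) : L₁ × L₂)⁆ = 0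
        rw [hbr]
        have h1 : ⁅x.val.1, y₁⁆ = 0 := by
          have := (LieModule.mem_maxTrivSubmodule F L₁ L₁ _).mp h y₁
          rw [← lie_skew, this, neg_zero]
        rw [h1, lie_zero]
        rfl
    · refine ⟨x.val.1, h, edist_le_one_of_eq_or_adj ?_⟩
      by_cases he : x = (⟨(x.val.1, 0), hvert₁ x.val.1 h⟩ :
          {z : L₁ × L₂ // z ∉ LieAlgebra.center F (L₁ × L₂)})
      · exact Or.inl he
      · refine Or.inr (And.intro he ?_)
        show ⁅(x.val.1, x.val.2), ((x.val.1, (0:L₂)) : L₁ × L₂)⁆ = 0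
        rw [hbr, lie_self, lie_zero]
        rfl
  -- step 2: any vertex is within distance 1 of a vertex of the form (0, b), b noncentral
  have step2 : ∀ x : {z : L₁ × L₂ // z ∉ LieAlgebra.center F (L₁ × L₂)},
      ∃ b : L₂, ∃ hb : b ∉ LieAlgebra.center F L₂,
        G.edist x ⟨(0, b), hvert₂ b hb⟩ ≤ 1 := by
    intro x
    by_cases h : x.val.2 ∈ LieAlgebra.center F L₂
    · refine ⟨y₂, hδ, edist_le_one_of_eq_or_adj (Or.inr (And.intro ?_ ?_))⟩
      · intro he
        apply hδ
        have : x.val.2 = y₂ := congrArg Prod.snd (congrArg Subtype.val he)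
        rwa [← this]
      · show ⁅(x.val.1, x.val.2), (((0:L₁), y₂) : L₁ × L₂)⁆ = 0
        rw [hbr]
        have h2 : ⁅x.val.2, y₂⁆ = 0 := by
          have := (LieModule.mem_maxTrivSubmodule F L₂ L₂ _).mp h y₂
          rw [← lie_skew, this, neg_zero]
        rw [h2, lie_zero]
        rfl
    · refine ⟨x.val.2, h, edist_le_one_of_eq_or_adj ?_⟩
      by_cases he : x = (⟨(0, x.val.2), hvert₂ x.val.2 h⟩ :
          {z : L₁ × L₂ // z ∉ LieAlgebra.center F (L₁ × L₂)})
      · exact Or.inl he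
      · refine Or.inr (And.intro he ?_)
        show ⁅(x.val.1, x.val.2), (((0:L₁), x.val.2) : L₁ × L₂)⁆ = 0
        rw [hbr, lie_self, lie_zero]
        rfl
  -- midpoints of opposite types are adjacent
  have mid : ∀ a : L₁, ∀ ha : a ∉ LieAlgebra.center F L₁, ∀ b : L₂,
      ∀ hb : b ∉ LieAlgebra.center F L₂,
      G.Adj ⟨(a, 0), hvert₁ a ha⟩ ⟨(0, b), hvert₂ b hb⟩ := by
    intro a ha b hb
    refine And.intro ?_ ?_
    · intro he
      apply ha
      have : a = (0 : L₁) := congrArg Prod.fst (congrArg Subtype.val he)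
      rw [this]
      exact (LieAlgebra.center F L₁).zero_mem
    · show ⁅((a, (0:L₂)) : L₁ × L₂), (((0:L₁), b) : L₁ × L₂)⁆ = 0
      rw [hbr, lie_zero, zero_lie]
      rfl
  -- every pair of vertices is within distance 3
  have key : ∀ x y : {z : L₁ × L₂ // z ∉ LieAlgebra.center F (L₁ × L₂)},
      G.edist x y ≤ 3 := by
    intro x y
    obtain ⟨a, ha, hxa⟩ := step1 x
    obtain ⟨b, hb, hyb⟩ := step2 y
    have h1 : G.edist (⟨(a, 0), hvert₁ a ha⟩ :
        {z : L₁ × L₂ // z ∉ LieAlgebra.center F (L₁ × L₂)}) ⟨(0, b), hvert₂ b hb⟩ ≤ 1 :=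
      edist_le_one_of_eq_or_adj (Or.inr (mid a ha b hb))
    calc G.edist x y ≤ G.edist x ⟨(a, 0), hvert₁ a ha⟩ +
          G.edist (⟨(a, 0), hvert₁ a ha⟩ :
            {z : L₁ × L₂ // z ∉ LieAlgebra.center F (L₁ × L₂)}) y :=
            SimpleGraph.edist_triangle
      _ ≤ G.edist x ⟨(a, 0), hvert₁ a ha⟩ +
          (G.edist (⟨(a, 0), hvert₁ a ha⟩ :
            {z : L₁ × L₂ // z ∉ LieAlgebra.center F (L₁ × L₂)}) ⟨(0, b), hvert₂ b hb⟩ +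
           G.edist (⟨(0, b), hvert₂ b hb⟩ :
            {z : L₁ × L₂ // z ∉ LieAlgebra.center F (L₁ × L₂)}) y) :=
            add_le_add_right SimpleGraph.edist_triangle _
      _ ≤ 1 + (1 + 1) := by
          refine add_le_add hxa (add_le_add h1 ?_)
          rw [SimpleGraph.edist_comm]
          exact hyb
      _ = 3 := by norm_num
  refine ⟨?_, SimpleGraph.ediam_le_of_edist_le key⟩
  have : Nonempty {z : L₁ × L₂ // z ∉ LieAlgebra.center F (L₁ × L₂)} :=
    ⟨⟨(y₁, 0), hvert₁ y₁ hα⟩⟩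
  refine ⟨fun x y => ?_⟩
  apply SimpleGraph.reachable_of_edist_ne_top
  intro h
  have := key x y
  rw [h] at this
  exact (by norm_num : ¬ ((⊤ : ℕ∞) ≤ 3)) this
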